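/- Let M be a topological group whose topology is T1, and let G be a subgroup of M whose underlying subspace is connected. Let x ∈ M and suppose that the set of commutators {x * g * x⁻¹ * g⁻¹ : g ∈ G} is finite. Then x commutes with every element of G: x * g = g * x for all g ∈ G. -/

import Mathlib

/-- Let `M` be a T1 topological group, `G ≤ M` a subgroup whose
underlying subspace is connected, and `x ∈ M`.  If the set of commutators
`{x * g * x⁻¹ * g⁻¹ : g ∈ G}` is finite, then `x` commutes with every element of `G`. -/
theorem stmt18 {M : Type*} [Group M] [TopologicalSpace M] [IsTopologicalGroup M]
    [T1Space M] (G : Subgroup M) (hG : IsConnected (G : Set M)) (x : M)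
    (hfin : Set.Finite {y : M | ∃ g ∈ G, y = x * g * x⁻¹ * g⁻¹}) :
    ∀ g ∈ G, x * g = g * x := by
  set f : M → M := fun g => x * g * x⁻¹ * g⁻¹ with hf
  have hcont : Continuous f := by fun_prop
  have himg : IsConnected (f '' (G : Set M)) := hG.image f hcont.continuousOn
  have himgfin : (f '' (G : Set M)).Finite := by
    apply hfin.subset
    rintro y ⟨g, hg, rfl⟩
    exact ⟨g, hg, rfl⟩
  -- finite connected set in T1 space is subsingleton
  have hsub : (f '' (G : Set M)).Subsingleton := by
    intro a ha b hb
    by_contra hab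
    have hp := himg.isPreconnected
    have h1 : IsOpen ({a}ᶜ : Set M) := isOpen_compl_singleton
    have h2 : IsOpen ((f '' (G : Set M) \ {a})ᶜ) :=
      (himgfin.subset (Set.diff_subset)).isClosed.isOpen_compl
    have := hp {a}ᶜ (f '' (G : Set M) \ {a})ᶜ h1 h2
      (by intro t ht
          by_cases h : t = a
          · right; simp [h]
          · left; exact h)
      ⟨b, hb, fun h => hab h.symm⟩ ⟨a, ha, by simp⟩
    obtain ⟨t, ht, h1', h2'⟩ := this
    exact h2' ⟨ht, h1'⟩
  have h1 : (1 : M) ∈ f '' (G : Set M) := ⟨1, G.one_mem, by simp [hf]⟩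
  intro g hg
  have : f g = 1 := hsub ⟨g, hg, rfl⟩ h1
  have : x * g * x⁻¹ * g⁻¹ = 1 := this
  group at this ⊢
  -- derive commutation
  have := mul_eq_one_iff_eq_inv.mp this
  calc x * g = (x * g * x⁻¹ * g⁻¹) * (g * x) := by group
    _ = g * x := by rw [‹x * g * x⁻¹ * g⁻¹ = 1›]; simp
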